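/- Under MTR and MTS, the sharp upper bound on the persuasion rate equals the ratio estimand: for positive reals P00, P10, P01, P11 summing to 1, the maximum of (q2+q5)/(1-P10-P11+q5) over q2, q5 satisfying 0 ≤ q5 ≤ P11 - P10(P01+P11)/(P00+P10) and 0 ≤ q2 ≤ P00 - P01(P10+P00)/(P01+P11) (assuming these upper limits are nonnegative) equals (P11/(P01+P11) - P10/(P00+P10)) / (P00/(P00+P10)). -/

import Mathlib

/-- Under MTR and MTS, the sharp upper bound on the persuasion rate equals the
ratio estimand: the maximum of `(q2+q5)/(1-P10-P11+q5)` over the feasible set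
equals `(P11/(P01+P11) - P10/(P00+P10)) / (P00/(P00+P10))`. -/
theorem stmt0 (P00 P10 P01 P11 : ℝ)
    (h00 : 0 < P00) (h10 : 0 < P10) (h01 : 0 < P01) (h11 : 0 < P11)
    (hsum : P00 + P10 + P01 + P11 = 1)
    (hub5 : 0 ≤ P11 - P10 * (P01 + P11) / (P00 + P10))
    (hub2 : 0 ≤ P00 - P01 * (P10 + P00) / (P01 + P11)) :
    IsGreatest
      {x : ℝ | ∃ q2 q5 : ℝ,
        0 ≤ q5 ∧ q5 ≤ P11 - P10 * (P01 + P11) / (P00 + P10) ∧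
        0 ≤ q2 ∧ q2 ≤ P00 - P01 * (P10 + P00) / (P01 + P11) ∧
        x = (q2 + q5) / (1 - P10 - P11 + q5)}
      ((P11 / (P01 + P11) - P10 / (P00 + P10)) / (P00 / (P00 + P10))) := by
  have ha : 0 < P00 + P10 := by linarith
  have hb : 0 < P01 + P11 := by linarith
  set q5s : ℝ := P11 - P10 * (P01 + P11) / (P00 + P10) with hq5s
  set q2s : ℝ := P00 - P01 * (P10 + P00) / (P01 + P11) with hq2s
  have hc : 1 - P10 - P11 = P00 + P01 := by linarith
  have hcpos : 0 < P00 + P01 := by linarith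
  have hq2sleP : q2s ≤ P00 := by
    have : 0 < P01 * (P10 + P00) / (P01 + P11) := by positivity
    simp only [hq2s]; linarith
  have Veq : (P11 / (P01 + P11) - P10 / (P00 + P10)) / (P00 / (P00 + P10))
      = (q2s + q5s) / (1 - P10 - P11 + q5s) := by
    rw [hc]
    have hden : P00 + P01 + q5s = P00 / (P00 + P10) := by
      rw [hq5s]
      field_simp
      ring_nf
      nlinarith [hsum]
    rw [hden, hq2s, hq5s]
    field_simp
    ring_nf
    linear_combination (P10 * P01 - P11 * P00) * hsum
  constructor
  · exact ⟨q2s, q5s, hub5, le_refl _, hub2, le_refl _, Veq⟩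
  · rintro x ⟨q2, q5, hq5_0, hq5, hq2_0, hq2, rfl⟩
    rw [Veq, hc]
    have hd1 : 0 < P00 + P01 + q5 := by linarith
    have hd2 : 0 < P00 + P01 + q5s := by linarith [hub5]
    rw [div_le_div_iff₀ hd1 hd2]
    nlinarith [mul_nonneg (sub_nonneg.2 hq2) hcpos.le,
      mul_nonneg (sub_nonneg.2 hq2) hub5,
      mul_nonneg (sub_nonneg.2 hq5) (sub_nonneg.2 hq2sleP),
      mul_nonneg (sub_nonneg.2 hq5) (sub_nonneg.2 (le_of_lt (lt_of_le_of_lt hq2sleP (by linarith : P00 < P00 + P01))))]
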